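/- arXiv:2003.12741 — 9 statements merged into one kernel-verified Lean document; each statement's English description precedes it below -/
import Mathlib

section
/- If S is a 2-isometry on a Hilbert space, then there is a constant K such that ‖Sⁿ‖² ≤ K·(n+1) for all n ≥ 0; i.e., the powers of a 2-isometry grow at most like √n in norm. -/
/-- The powers of a 2-isometry grow at most like `√n` in norm: there is a
constant `K` with `‖Sⁿ‖² ≤ K (n+1)` for all `n ≥ 0`. -/
theorem two_isometry_power_growth
    {H : Type*} [NormedAddCommGroup H] [InnerProductSpace ℂ H] [CompleteSpace H]
    (S : H →L[ℂ] H)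
    (h2 : ∀ x : H, ‖S (S x)‖ ^ 2 - 2 * ‖S x‖ ^ 2 + ‖x‖ ^ 2 = 0) :
    ∃ K : ℝ, ∀ n : ℕ, ‖S ^ n‖ ^ 2 ≤ K * (n + 1) := by
  set K : ℝ := max 1 (‖S‖ ^ 2) with hK
  have hK1 : (1:ℝ) ≤ K := le_max_left _ _
  have hKS : ‖S‖ ^ 2 ≤ K := le_max_right _ _
  have hK0 : (0:ℝ) ≤ K := le_trans zero_le_one hK1
  refine ⟨K, fun n => ?_⟩
  -- pointwise arithmetic progression
  have happ : ∀ (m : ℕ) (x : H), (S ^ (m+1)) x = S ((S ^ m) x) := by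
    intro m x
    rw [pow_succ']
    rfl
  have hdiff : ∀ x : H, ∀ m : ℕ,
      ‖(S ^ (m+1)) x‖ ^ 2 - ‖(S ^ m) x‖ ^ 2 = ‖S x‖ ^ 2 - ‖x‖ ^ 2 := by
    intro x m
    induction m with
    | zero => simp [happ 0 x]
    | succ k ih =>
        have h := h2 ((S ^ k) x)
        rw [happ (k+1) x, happ k x]
        rw [happ k x] at ih
        nlinarith [h, ih]
  have hAP : ∀ x : H, ∀ m : ℕ,
      ‖(S ^ m) x‖ ^ 2 = ‖x‖ ^ 2 + m * (‖S x‖ ^ 2 - ‖x‖ ^ 2) := by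
    intro x m
    induction m with
    | zero => simp
    | succ k ih =>
        have := hdiff x k
        rw [Nat.cast_succ]
        nlinarith [this, ih]
  have hbound : ∀ x : H, ‖(S ^ n) x‖ ^ 2 ≤ K * (n + 1) * ‖x‖ ^ 2 := by
    intro x
    have h1 : ‖S x‖ ^ 2 ≤ ‖S‖ ^ 2 * ‖x‖ ^ 2 := by
      have := S.le_opNorm x
      nlinarith [norm_nonneg (S x), norm_nonneg x, norm_nonneg S]
    have h2' : ‖S x‖ ^ 2 ≤ K * ‖x‖ ^ 2 := by nlinarith [sq_nonneg ‖x‖]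
    have h3 : ‖x‖ ^ 2 ≤ K * ‖x‖ ^ 2 := by nlinarith [sq_nonneg ‖x‖]
    rw [hAP x n]
    have hn : (0:ℝ) ≤ (n:ℝ) := Nat.cast_nonneg n
    nlinarith [sq_nonneg ‖x‖, sq_nonneg ‖S x‖]
  have hKn : (0:ℝ) ≤ K * (n + 1) := by positivity
  have hop : ‖S ^ n‖ ≤ Real.sqrt (K * (n + 1)) := by
    apply ContinuousLinearMap.opNorm_le_bound _ (Real.sqrt_nonneg _)
    intro x
    have := hbound x
    have h4 : ‖(S ^ n) x‖ ≤ Real.sqrt (K * (n + 1)) * ‖x‖ := by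
      rw [← Real.sqrt_sq (norm_nonneg ((S ^ n) x)),
        ← Real.sqrt_sq (by positivity : (0:ℝ) ≤ Real.sqrt (K * (n + 1)) * ‖x‖)]
      apply Real.sqrt_le_sqrt
      rw [mul_pow, Real.sq_sqrt hKn]
      exact this
    exact h4
  calc ‖S ^ n‖ ^ 2 ≤ Real.sqrt (K * (n + 1)) ^ 2 := by
        exact pow_le_pow_left₀ (norm_nonneg _) hop 2
    _ = K * (n + 1) := Real.sq_sqrt hKn
end

section
/- An invertible 2-isometry on a Hilbert space is a unitary operator (equivalently, an invertible operator S with ‖S²x‖² - 2‖Sx‖² + ‖x‖² = 0 for all x is an isometry). -/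
private lemma two_isometry_expand
    {K : Type*} [NormedAddCommGroup K] [InnerProductSpace ℂ K]
    (T : K →L[ℂ] K)
    (h2 : ∀ x : K, ‖T (T x)‖ ^ 2 - 2 * ‖T x‖ ^ 2 + ‖x‖ ^ 2 = 0) (x : K) :
    ‖x‖ ≤ ‖T x‖ := by
  set d : ℝ := ‖T x‖ ^ 2 - ‖x‖ ^ 2 with hd
  have key : ∀ n : ℕ, ‖(T ^ n) x‖ ^ 2 = ‖x‖ ^ 2 + n * d ∧
      ‖(T ^ (n + 1)) x‖ ^ 2 = ‖x‖ ^ 2 + (n + 1) * d := by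
    intro n
    induction n with
    | zero => refine ⟨by simp, by simp [hd]; try ring⟩
    | succ n ih =>
      obtain ⟨ih1, ih2⟩ := ih
      have e1 : T ((T ^ n) x) = (T ^ (n + 1)) x := by rw [pow_succ']; rfl
      have e2 : (T ^ (n + 1 + 1)) x = T ((T ^ (n + 1)) x) := by rw [pow_succ']; rfl
      have h := h2 ((T ^ n) x)
      rw [e1, ← e2] at h
      constructor
      · rw [ih2]; push_cast; ring
      · push_cast at ih1 ih2 h ⊢
        linarith
  have hnn : ∀ n : ℕ, 0 ≤ ‖x‖ ^ 2 + n * d := by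
    intro n
    have := (key n).1
    nlinarith [sq_nonneg ‖(T ^ n) x‖]
  have hd0 : 0 ≤ d := by
    by_contra hneg
    push_neg at hneg
    obtain ⟨n, hn⟩ := exists_nat_gt (‖x‖ ^ 2 / (-d))
    have hdpos : 0 < -d := by linarith
    have : ‖x‖ ^ 2 < n * (-d) := by
      rwa [div_lt_iff₀ hdpos] at hn
    have := hnn n
    nlinarith
  have hsq : ‖x‖ ^ 2 ≤ ‖T x‖ ^ 2 := by simp [hd] at hd0; linarith
  exact (pow_le_pow_iff_left₀ (norm_nonneg _) (norm_nonneg _) two_ne_zero).mp hsq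

/-- An invertible 2-isometry on a Hilbert space is unitary: an invertible `S`
with `‖S²x‖² - 2‖Sx‖² + ‖x‖² = 0` for all `x` is an isometry. -/
theorem invertible_two_isometry_is_isometry
    {K : Type*} [NormedAddCommGroup K] [InnerProductSpace ℂ K] [CompleteSpace K]
    (S : K →L[ℂ] K) (hinv : IsUnit S)
    (h2 : ∀ x : K, ‖S (S x)‖ ^ 2 - 2 * ‖S x‖ ^ 2 + ‖x‖ ^ 2 = 0) :
    ∀ x : K, ‖S x‖ = ‖x‖ := by
  obtain ⟨u, hu⟩ := hinv
  set V : K →L[ℂ] K := ↑u⁻¹ with hV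
  have hSV : ∀ z : K, S (V z) = z := by
    intro z
    have hmul : ((u : K →L[ℂ] K) * ↑u⁻¹) = 1 := u.mul_inv
    have := DFunLike.congr_fun hmul z
    simpa [ContinuousLinearMap.mul_apply, hu, ← hV] using this
  have hVS : ∀ z : K, V (S z) = z := by
    intro z
    have hmul : ((↑u⁻¹ : K →L[ℂ] K) * ↑u) = 1 := u.inv_mul
    have := DFunLike.congr_fun hmul z
    simpa [ContinuousLinearMap.mul_apply, hu, ← hV] using this
  have h2V : ∀ y : K, ‖V (V y)‖ ^ 2 - 2 * ‖V y‖ ^ 2 + ‖y‖ ^ 2 = 0 := by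
    intro y
    have h := h2 (V (V y))
    rw [hSV, hSV] at h
    linarith
  intro x
  have h1 : ‖x‖ ≤ ‖S x‖ := two_isometry_expand S h2 x
  have h2' : ‖S x‖ ≤ ‖V (S x)‖ := two_isometry_expand V h2V (S x)
  rw [hVS] at h2'
  exact le_antisymm h2' h1
end

section
/- Let T be a bounded operator on a Hilbert space H, let Δ = (T*²T²)/2 - T*T + I/2, and suppose Δ ≥ 0 (T is convex). Define T₁ on H ⊕ H by the block matrix T₁ = [[T, 0], [Δ^{1/2}, 0]]. Then for every h ∈ H ≅ H ⊕ {0} and every n ≥ 1, ‖T₁ⁿ(h,0)‖² = (‖T^{n+1}h‖² + ‖T^{n-1}h‖²)/2. -/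
open ContinuousLinearMap

lemma convex_lifting_normD_sq {H : Type*} [NormedAddCommGroup H] [InnerProductSpace ℂ H]
    [CompleteSpace H]
    (T D : H →L[ℂ] H) (hDpos : D.IsPositive)
    (hDD : D ∘L D =
      (2 : ℂ)⁻¹ • (adjoint (T ^ 2) ∘L (T ^ 2) - (2 : ℂ) • (adjoint T ∘L T) + 1))
    (x : H) :
    ‖D x‖ ^ 2 = (‖(T ^ 2) x‖ ^ 2 - 2 * ‖T x‖ ^ 2 + ‖x‖ ^ 2) / 2 := by
  have hsa : adjoint D = D := hDpos.isSelfAdjoint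
  have h1 : (‖D x‖ ^ 2 : ℝ) = RCLike.re (inner ℂ x ((D ∘L D) x) : ℂ) := by
    rw [comp_apply, ← adjoint_inner_left D, hsa]
    simp [inner_self_eq_norm_sq, ← Complex.ofReal_pow]
  rw [h1, hDD]
  simp only [smul_apply, sub_apply, add_apply, one_apply, comp_apply, smul_apply,
    inner_smul_right, inner_sub_right, inner_add_right, adjoint_inner_right]
  simp [inner_self_eq_norm_sq, map_sub, map_add, ← Complex.ofReal_pow]
  ring

lemma convex_lifting_iter {H : Type*} [NormedAddCommGroup H] [InnerProductSpace ℂ H]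
    [CompleteSpace H]
    (T D : H →L[ℂ] H)
    (T₁ : WithLp 2 (H × H) →L[ℂ] WithLp 2 (H × H))
    (hT₁ : ∀ u : WithLp 2 (H × H),
      T₁ u = (WithLp.equiv 2 (H × H)).symm (T u.fst, D u.fst))
    (h : H) : ∀ n, 1 ≤ n →
      (T₁ ^ n) ((WithLp.equiv 2 (H × H)).symm (h, 0)) =
        (WithLp.equiv 2 (H × H)).symm ((T ^ n) h, D ((T ^ (n - 1)) h)) := by
  intro n hn
  induction n with
  | zero => omega
  | succ m ih =>
    rcases Nat.eq_or_lt_of_le hn with h1 | h1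
    · simp [← h1, pow_succ, pow_one, hT₁]
    · have hm : 1 ≤ m := by omega
      rw [pow_succ', ContinuousLinearMap.mul_apply, ih hm, hT₁]
      have : ((WithLp.equiv 2 (H × H)).symm ((T ^ m) h, D ((T ^ (m-1)) h))).fst = (T ^ m) h := rfl
      rw [this]
      have h2 : T ((T ^ m) h) = (T ^ (m+1)) h := by rw [pow_succ', ContinuousLinearMap.mul_apply]
      simp [h2]
      exact ((Function.Commute.iterate_self (⇑T) m).eq h).symm

/-- For a convex operator `T` (i.e. `Δ = (T*²T² - 2T*T + I)/2 ≥ 0`) and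
`T₁ = [[T,0],[Δ^{1/2},0]]` on the Hilbert direct sum `H ⊕ H`, one has
`‖T₁ⁿ(h,0)‖² = (‖T^{n+1}h‖² + ‖T^{n-1}h‖²)/2` for all `h ∈ H`, `n ≥ 1`. -/
theorem convex_lifting_step_norm_identity
    {H : Type*} [NormedAddCommGroup H] [InnerProductSpace ℂ H] [CompleteSpace H]
    (T D : H →L[ℂ] H)
    (hDpos : D.IsPositive)
    (hDD : D ∘L D =
      (2 : ℂ)⁻¹ • (adjoint (T ^ 2) ∘L (T ^ 2) - (2 : ℂ) • (adjoint T ∘L T) + 1))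
    (hconv : (adjoint (T ^ 2) ∘L (T ^ 2) - (2 : ℂ) • (adjoint T ∘L T) + 1).IsPositive)
    (T₁ : WithLp 2 (H × H) →L[ℂ] WithLp 2 (H × H))
    (hT₁ : ∀ u : WithLp 2 (H × H),
      T₁ u = (WithLp.equiv 2 (H × H)).symm (T u.fst, D u.fst)) :
    ∀ (h : H) (n : ℕ), 1 ≤ n →
      ‖(T₁ ^ n) ((WithLp.equiv 2 (H × H)).symm (h, 0))‖ ^ 2 =
        (‖(T ^ (n + 1)) h‖ ^ 2 + ‖(T ^ (n - 1)) h‖ ^ 2) / 2 := by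
  intro h n hn
  rw [convex_lifting_iter T D T₁ hT₁ h n hn]
  have hnorm : ∀ a b : H, ‖(WithLp.equiv 2 (H × H)).symm (a, b)‖ ^ 2 = ‖a‖ ^ 2 + ‖b‖ ^ 2 := by
    intro a b
    rw [WithLp.prod_norm_sq_eq_of_L2]
    rfl
  rw [hnorm, convex_lifting_normD_sq T D hDpos hDD]
  have e1 : (T ^ 2) ((T ^ (n - 1)) h) = (T ^ (n + 1)) h := by
    rw [← ContinuousLinearMap.mul_apply, ← pow_add]
    congr 2
    omega
  have e2 : T ((T ^ (n - 1)) h) = (T ^ n) h := by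
    rw [← ContinuousLinearMap.mul_apply, ← pow_succ']
    congr 2
    omega
  rw [e1, e2]
  ring
end

section
/- With T convex satisfying sup_{n≥0} ‖Tⁿ‖²/(n+1) = c < ∞, the operator T₁ = [[T,0],[Δ^{1/2},0]] on H ⊕ H (with Δ = (T*²T² - 2T*T + I)/2 ≥ 0) satisfies ‖T₁ⁿ‖² ≤ c(n+1) for all n ≥ 0. -/
open ContinuousLinearMap
open scoped InnerProductSpace

/-- If `T` is convex and `‖Tⁿ‖² ≤ c(n+1)` for all `n ≥ 0`, then the operator
`T₁ = [[T,0],[Δ^{1/2},0]]` on the Hilbert direct sum `H ⊕ H` also satisfies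
`‖T₁ⁿ‖² ≤ c(n+1)`. -/
theorem convex_lifting_step_growth
    {H : Type*} [NormedAddCommGroup H] [InnerProductSpace ℂ H] [CompleteSpace H]
    (T D : H →L[ℂ] H) (c : ℝ)
    (hc : ∀ n : ℕ, ‖T ^ n‖ ^ 2 ≤ c * (n + 1))
    (hDpos : D.IsPositive)
    (hDD : D ∘L D =
      (2 : ℂ)⁻¹ • (adjoint (T ^ 2) ∘L (T ^ 2) - (2 : ℂ) • (adjoint T ∘L T) + 1))
    (hconv : (adjoint (T ^ 2) ∘L (T ^ 2) - (2 : ℂ) • (adjoint T ∘L T) + 1).IsPositive)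
    (T₁ : WithLp 2 (H × H) →L[ℂ] WithLp 2 (H × H))
    (hT₁ : ∀ u : WithLp 2 (H × H),
      T₁ u = (WithLp.equiv 2 (H × H)).symm (T u.fst, D u.fst)) :
    ∀ n : ℕ, ‖T₁ ^ n‖ ^ 2 ≤ c * (n + 1) := by
  have hc0 : (0:ℝ) ≤ c := by
    have := hc 0
    norm_num at this
    nlinarith [sq_nonneg ‖T ^ 0‖]
  -- ‖D x‖² = (‖T² x‖² - 2 ‖T x‖² + ‖x‖²) / 2
  have hDsq : ∀ x : H, ‖D x‖ ^ 2 =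
      (‖(T ^ 2) x‖ ^ 2 - 2 * ‖T x‖ ^ 2 + ‖x‖ ^ 2) / 2 := by
    intro x
    have hsa : adjoint D = D := isSelfAdjoint_iff'.mp hDpos.isSelfAdjoint
    have h1 : (⟪D x, D x⟫_ℂ)
        = RCLike.ofReal ((‖(T ^ 2) x‖ ^ 2 - 2 * ‖T x‖ ^ 2 + ‖x‖ ^ 2) / 2) := by
      rw [← adjoint_inner_right D x (D x), hsa]
      show (⟪x, (D ∘L D) x⟫_ℂ) = _
      rw [hDD]
      simp only [smul_apply, add_apply, sub_apply, one_apply, coe_comp',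
        Function.comp_apply, inner_smul_right, inner_sub_right, inner_add_right]
      rw [adjoint_inner_right, adjoint_inner_right]
      simp only [inner_self_eq_norm_sq_to_K]
      push_cast
      ring_nf
      simp only [id_eq, inner_self_eq_norm_sq_to_K]
    rw [inner_self_eq_norm_sq_to_K] at h1
    rw [← RCLike.ofReal_pow] at h1
    exact_mod_cast h1
  -- formula for iterates
  have hiter : ∀ (m : ℕ) (u : WithLp 2 (H × H)),
      (T₁ ^ (m + 1)) u = (WithLp.equiv 2 (H × H)).symm
        ((T ^ (m + 1)) u.fst, D ((T ^ m) u.fst)) := by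
    intro m
    induction m with
    | zero => intro u; simp [hT₁ u]
    | succ m ih =>
      intro u
      have hstep : (T₁ ^ (m + 1 + 1)) u = (T₁ ^ (m + 1)) (T₁ u) := by
        rw [pow_succ, mul_apply_eq_comp]
      rw [hstep, ih, hT₁ u]
      have hf : ((WithLp.equiv 2 (H × H)).symm (T u.fst, D u.fst)).fst = T u.fst :=
        rfl
      rw [hf]
      have g1 : (T ^ (m + 1 + 1)) u.fst = (T ^ (m + 1)) (T u.fst) := by
        rw [pow_succ T (m + 1), mul_apply_eq_comp]
      have g2 : (T ^ (m + 1)) u.fst = (T ^ m) (T u.fst) := by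
        rw [pow_succ T m, mul_apply_eq_comp]
      rw [g1, g2]
  have hTk : ∀ (k : ℕ) (h : H), ‖(T ^ k) h‖ ^ 2 ≤ c * (k + 1) * ‖h‖ ^ 2 := by
    intro k h
    have h1 : ‖(T ^ k) h‖ ≤ ‖T ^ k‖ * ‖h‖ := le_opNorm _ _
    have h2 := hc k
    nlinarith [norm_nonneg ((T ^ k) h), norm_nonneg (T ^ k), norm_nonneg h,
      sq_nonneg ‖h‖]
  -- pointwise bound for n ≥ 1
  have hptw : ∀ (m : ℕ) (u : WithLp 2 (H × H)),
      ‖(T₁ ^ (m + 1)) u‖ ^ 2 ≤ c * (m + 2) * ‖u‖ ^ 2 := by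
    intro m u
    rw [hiter m u, WithLp.prod_norm_sq_eq_of_L2, WithLp.equiv_symm_apply, WithLp.toLp_fst,
      WithLp.toLp_snd]
    have hD := hDsq ((T ^ m) u.fst)
    have e1 : (T ^ 2) ((T ^ m) u.fst) = (T ^ (m + 2)) u.fst := by
      rw [add_comm m 2, pow_add, mul_apply_eq_comp]
    have e2 : T ((T ^ m) u.fst) = (T ^ (m + 1)) u.fst := by
      rw [pow_succ', mul_apply_eq_comp]
    rw [e1, e2] at hD
    rw [hD]
    have b1 := hTk (m + 2) u.fst
    have b2 := hTk m u.fst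
    have hu : ‖u.fst‖ ^ 2 ≤ ‖u‖ ^ 2 := by
      rw [WithLp.prod_norm_sq_eq_of_L2]
      nlinarith [sq_nonneg ‖u.snd‖]
    push_cast at b1 b2 ⊢
    nlinarith [mul_le_mul_of_nonneg_left hu hc0]
  intro n
  match n with
  | 0 =>
    by_cases hs : Subsingleton H
    · have hss : Subsingleton (WithLp 2 (H × H)) := by
        constructor; intro a b
        have h1 : a.fst = b.fst := Subsingleton.elim _ _
        have h2 : a.snd = b.snd := Subsingleton.elim _ _
        exact WithLp.ofLp_injective 2 (Prod.ext h1 h2)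
      have hT0 : (T₁ ^ 0 : WithLp 2 (H × H) →L[ℂ] WithLp 2 (H × H)) = 0 :=
        Subsingleton.elim _ _
      rw [hT0]
      rw [norm_zero]
      norm_num
      exact hc0
    · have : Nontrivial H := not_subsingleton_iff_nontrivial.mp hs
      have h1 : ‖(T ^ 0 : H →L[ℂ] H)‖ = 1 := by rw [pow_zero]; exact norm_id
      have hc1 : (1:ℝ) ≤ c := by
        have := hc 0; rw [h1] at this; norm_num at this; linarith
      have h2 : ‖(T₁ ^ 0 : WithLp 2 (H × H) →L[ℂ] WithLp 2 (H × H))‖ ≤ 1 := by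
        rw [pow_zero]; exact norm_id_le
      have h3 : (0:ℝ) ≤ ‖(T₁ ^ 0 : WithLp 2 (H × H) →L[ℂ] WithLp 2 (H × H))‖ :=
        norm_nonneg _
      push_cast
      nlinarith
  | m + 1 =>
    have hM : (0:ℝ) ≤ c * (m + 2) := by positivity
    have hb : ‖T₁ ^ (m + 1)‖ ≤ Real.sqrt (c * (m + 2)) := by
      apply opNorm_le_bound _ (Real.sqrt_nonneg _)
      intro u
      have hpp := hptw m u
      have h1 : ‖(T₁ ^ (m + 1)) u‖ ^ 2 ≤ (Real.sqrt (c * (m + 2)) * ‖u‖) ^ 2 := by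
        rw [mul_pow, Real.sq_sqrt hM]
        linarith
      calc ‖(T₁ ^ (m + 1)) u‖
          = Real.sqrt (‖(T₁ ^ (m + 1)) u‖ ^ 2) := (Real.sqrt_sq (norm_nonneg _)).symm
        _ ≤ Real.sqrt ((Real.sqrt (c * (m + 2)) * ‖u‖) ^ 2) := Real.sqrt_le_sqrt h1
        _ = Real.sqrt (c * (m + 2)) * ‖u‖ := Real.sqrt_sq (by positivity)
    have h2 : ‖T₁ ^ (m + 1)‖ ^ 2 ≤ Real.sqrt (c * (m + 2)) ^ 2 :=
      pow_le_pow_left₀ (norm_nonneg _) hb 2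
    rw [Real.sq_sqrt hM] at h2
    push_cast
    linarith
end

section
/- If T is convex (T*²T² - 2T*T + I ≥ 0) and Δ = (T*²T² - 2T*T + I)/2, then the operator T₁ = [[T,0],[Δ^{1/2},0]] on H ⊕ H is again convex. -/
open ContinuousLinearMap

/-- If `T` is convex (`T*²T² - 2T*T + I ≥ 0`), then
`T₁ = [[T,0],[Δ^{1/2},0]]` on the Hilbert direct sum `H ⊕ H` is again convex:
`‖T₁²u‖² - 2‖T₁u‖² + ‖u‖² ≥ 0` for all `u`. -/
theorem convex_lifting_step_convex
    {H : Type*} [NormedAddCommGroup H] [InnerProductSpace ℂ H] [CompleteSpace H]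
    (T D : H →L[ℂ] H)
    (hDpos : D.IsPositive)
    (hDD : D ∘L D =
      (2 : ℂ)⁻¹ • (adjoint (T ^ 2) ∘L (T ^ 2) - (2 : ℂ) • (adjoint T ∘L T) + 1))
    (hconv : (adjoint (T ^ 2) ∘L (T ^ 2) - (2 : ℂ) • (adjoint T ∘L T) + 1).IsPositive)
    (T₁ : WithLp 2 (H × H) →L[ℂ] WithLp 2 (H × H))
    (hT₁ : ∀ u : WithLp 2 (H × H),
      T₁ u = (WithLp.equiv 2 (H × H)).symm (T u.fst, D u.fst)) :
    ∀ u : WithLp 2 (H × H), 0 ≤ ‖T₁ (T₁ u)‖ ^ 2 - 2 * ‖T₁ u‖ ^ 2 + ‖u‖ ^ 2 := by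
  have hx : ∀ (A : H →L[ℂ] H) (y : H),
      RCLike.re (inner ℂ y ((adjoint A) (A y)) : ℂ) = ‖A y‖ ^ 2 := by
    intro A y
    rw [adjoint_inner_right]
    exact inner_self_eq_norm_sq _
  have key : ∀ x : H, 2 * ‖D x‖ ^ 2 = ‖T (T x)‖ ^ 2 - 2 * ‖T x‖ ^ 2 + ‖x‖ ^ 2 := by
    intro x
    have hDD2 : (2 : ℂ) • (D ∘L D) =
        adjoint (T ^ 2) ∘L (T ^ 2) - (2 : ℂ) • (adjoint T ∘L T) + 1 := by
      rw [hDD, smul_smul]; norm_num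
    have hDx : RCLike.re (inner ℂ x ((adjoint D) (D x)) : ℂ) = ‖D x‖ ^ 2 := hx D x
    rw [hDpos.isSelfAdjoint.adjoint_eq] at hDx
    have hT2 : RCLike.re (inner ℂ x ((adjoint (T ^ 2)) ((T ^ 2) x)) : ℂ) = ‖T (T x)‖ ^ 2 := by
      rw [hx (T ^ 2) x]
      simp [pow_two, mul_apply]
    have hTx : RCLike.re (inner ℂ x ((adjoint T) (T x)) : ℂ) = ‖T x‖ ^ 2 := hx T x
    have h2 := congrArg (fun A : H →L[ℂ] H => RCLike.re (inner ℂ x (A x) : ℂ)) hDD2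
    simp only [smul_apply, add_apply, sub_apply, one_apply, comp_apply,
      inner_smul_right, inner_add_right, inner_sub_right, two_mul, map_add, map_sub] at h2
    rw [hDx, hT2, hTx, ContinuousLinearMap.one_apply, inner_self_eq_norm_sq] at h2
    linarith
  intro u
  rw [hT₁, hT₁]
  rw [WithLp.prod_norm_sq_eq_of_L2, WithLp.prod_norm_sq_eq_of_L2,
    WithLp.prod_norm_sq_eq_of_L2 u]
  simp only [WithLp.equiv_symm_apply, WithLp.toLp_fst, WithLp.toLp_snd]
  have k1 := key u.fst
  have k2 := key (T u.fst)
  nlinarith [sq_nonneg ‖D (T (T u.fst))‖, sq_nonneg ‖u.snd‖, sq_nonneg ‖D (T u.fst)‖]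
end

section
/- Let V be an isometry and Q a bounded operator on a Hilbert space K with Q² = 0 and VQ = QV. Then S = V + Q is a 3-isometry: Σ_{j=0}^{3}(-1)^j C(3,j) S*ʲSʲ = 0. -/
open ContinuousLinearMap

/-- Third difference of the quadratic `n ↦ ‖u + n q‖²` vanishes. -/
lemma third_diff_norm_sq {K : Type*} [NormedAddCommGroup K] [InnerProductSpace ℝ K]
    (u q : K) :
    ‖u + (q + (q + q))‖ ^ 2 - 3 * ‖u + (q + q)‖ ^ 2
      + 3 * ‖u + q‖ ^ 2 - ‖u‖ ^ 2 = 0 := by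
  have h1 : ‖u + q‖ ^ 2 = ‖u‖ ^ 2 + 2 * inner ℝ u q + ‖q‖ ^ 2 := norm_add_sq_real u q
  have h2 : ‖u + (q + q)‖ ^ 2 = ‖u‖ ^ 2 + 2 * inner ℝ u (q + q) + ‖q + q‖ ^ 2 :=
    norm_add_sq_real u (q + q)
  have h3 : ‖u + (q + (q + q))‖ ^ 2
      = ‖u‖ ^ 2 + 2 * inner ℝ u (q + (q + q)) + ‖q + (q + q)‖ ^ 2 :=
    norm_add_sq_real u (q + (q + q))
  have h4 : ‖q + q‖ ^ 2 = ‖q‖ ^ 2 + 2 * inner ℝ q q + ‖q‖ ^ 2 := norm_add_sq_real q q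
  have h5 : ‖q + (q + q)‖ ^ 2 = ‖q‖ ^ 2 + 2 * inner ℝ q (q + q) + ‖q + q‖ ^ 2 :=
    norm_add_sq_real q (q + q)
  have hqq : (inner ℝ q q : ℝ) = ‖q‖ ^ 2 := real_inner_self_eq_norm_sq q
  simp only [inner_add_right] at h2 h3 h5
  rw [h1, h2, h3, h5, h4, hqq]
  ring

/-- If `V` is an isometry, `Q² = 0` and `VQ = QV`, then `S = V + Q` is a
3-isometry: `‖S³x‖² - 3‖S²x‖² + 3‖Sx‖² - ‖x‖² = 0` for all `x`. -/
theorem isometry_plus_nilpotent_is_three_isometry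
    {K : Type*} [NormedAddCommGroup K] [InnerProductSpace ℂ K] [CompleteSpace K]
    (V Q : K →L[ℂ] K)
    (hV : ∀ x : K, ‖V x‖ = ‖x‖)
    (hQ : Q ∘L Q = 0)
    (hVQ : V ∘L Q = Q ∘L V) :
    ∀ x : K,
      ‖((V + Q) ^ 3) x‖ ^ 2 - 3 * ‖((V + Q) ^ 2) x‖ ^ 2
        + 3 * ‖(V + Q) x‖ ^ 2 - ‖x‖ ^ 2 = 0 := by
  intro x
  have hQ0 : ∀ y : K, Q (Q y) = 0 := by
    intro y
    have := ContinuousLinearMap.ext_iff.mp hQ y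
    simpa using this
  have hC : ∀ y : K, Q (V y) = V (Q y) := by
    intro y
    have := ContinuousLinearMap.ext_iff.mp hVQ y
    simpa using this.symm
  have s2 : ((V + Q) ^ 2) x = V (V x + (Q x + Q x)) := by
    simp only [pow_two, mul_apply_eq_comp, add_apply, map_add, hQ0, hC, add_zero]
    abel
  have s3 : ((V + Q) ^ 3) x = V (V (V x + (Q x + (Q x + Q x)))) := by
    have : ((V + Q) ^ 3) x = (V + Q) (((V + Q) ^ 2) x) := by
      rw [pow_succ', mul_apply_eq_comp]
    rw [this, s2]
    simp only [add_apply, map_add, map_zero, hQ0, hC, add_zero]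
    abel
  have n1 : ‖(V + Q) x‖ = ‖V x + Q x‖ := by rw [add_apply]
  have n2 : ‖((V + Q) ^ 2) x‖ = ‖V x + (Q x + Q x)‖ := by rw [s2, hV]
  have n3 : ‖((V + Q) ^ 3) x‖ = ‖V x + (Q x + (Q x + Q x))‖ := by rw [s3, hV, hV]
  have n0 : ‖x‖ = ‖V x‖ := (hV x).symm
  letI : InnerProductSpace ℝ K := InnerProductSpace.complexToReal
  rw [n1, n2, n3, n0]
  exact third_diff_norm_sq (V x) (Q x)
end

section
/- If V is an isometry on K commuting with a bounded operator C on K, then the operator S = [[V, C],[0, V]] on K ⊕ K, written as S = W + Q with W = V ⊕ V isometric and Q(x,y) = (Cy, 0), satisfies Q² = 0 and WQ = QW; hence S is a 3-isometry. -/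
open ContinuousLinearMap RCLike

lemma cube_diff {E : Type*} [NormedAddCommGroup E] [InnerProductSpace ℂ E] (a b : E) :
    ‖a + b + b + b‖ ^ 2 - 3 * ‖a + b + b‖ ^ 2 + 3 * ‖a + b‖ ^ 2 - ‖a‖ ^ 2 = 0 := by
  simp only [@norm_add_sq ℂ, inner_add_left, map_add, inner_self_eq_norm_sq]
  ring

/-- If `V` is an isometry commuting with `C`, then `S = [[V, C],[0, V]]` on the
Hilbert direct sum `K ⊕ K`, written `S = W + Q` with `W = V ⊕ V` and
`Q(x,y) = (Cy, 0)`, satisfies `Q² = 0` and `WQ = QW`; hence `S` is a 3-isometry. -/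
theorem foguel_type_three_isometry
    {K : Type*} [NormedAddCommGroup K] [InnerProductSpace ℂ K] [CompleteSpace K]
    (V C : K →L[ℂ] K)
    (hV : ∀ x : K, ‖V x‖ = ‖x‖)
    (hVC : C ∘L V = V ∘L C)
    (S W Q : WithLp 2 (K × K) →L[ℂ] WithLp 2 (K × K))
    (hS : ∀ u : WithLp 2 (K × K),
      S u = (WithLp.equiv 2 (K × K)).symm (V u.fst + C u.snd, V u.snd))
    (hW : ∀ u : WithLp 2 (K × K),
      W u = (WithLp.equiv 2 (K × K)).symm (V u.fst, V u.snd))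
    (hQ : ∀ u : WithLp 2 (K × K),
      Q u = (WithLp.equiv 2 (K × K)).symm (C u.snd, 0)) :
    S = W + Q ∧ Q ∘L Q = 0 ∧ W ∘L Q = Q ∘L W ∧
    (∀ u : WithLp 2 (K × K),
      ‖(S ^ 3) u‖ ^ 2 - 3 * ‖(S ^ 2) u‖ ^ 2 + 3 * ‖S u‖ ^ 2 - ‖u‖ ^ 2 = 0) := by
  have hCV : ∀ y : K, C (V y) = V (C y) := fun y => congrFun (congrArg DFunLike.coe hVC) y
  refine ⟨?_, ?_, ?_, ?_⟩
  · ext u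
    simp only [add_apply, hS, hW, hQ, WithLp.equiv_symm_apply, ← WithLp.toLp_add]
    congr 1
    simp [Prod.mk_add_mk]
  · ext u
    simp only [comp_apply, hQ, zero_apply, WithLp.equiv_symm_apply, WithLp.toLp_snd, map_zero]
    exact WithLp.toLp_zero (p := 2) (V := K × K)
  · ext u
    simp only [comp_apply, hQ, hW, WithLp.equiv_symm_apply, WithLp.toLp_fst, WithLp.toLp_snd,
      map_zero, hCV]
  · intro u
    set x := u.fst with hx
    set y := u.snd with hy
    have h1 : S u = (WithLp.equiv 2 (K × K)).symm (V x + C y, V y) := hS u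
    have e1f : (S u).fst = V x + C y := by rw [h1]; rfl
    have e1s : (S u).snd = V y := by rw [h1]; rfl
    have h2 : (S ^ 2) u = S (S u) := by rw [pow_two]; rfl
    have e2f : ((S ^ 2) u).fst = V (V x + C y) + C (V y) := by
      rw [h2, hS (S u), e1f, e1s]; rfl
    have e2s : ((S ^ 2) u).snd = V (V y) := by rw [h2, hS (S u), e1s]; rfl
    have h3 : (S ^ 3) u = S ((S ^ 2) u) := by rw [pow_succ]; rfl
    have e3f : ((S ^ 3) u).fst = V (V (V x + C y) + C (V y)) + C (V (V y)) := by
      rw [h3, hS ((S^2) u), e2f, e2s]; rfl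
    have e3s : ((S ^ 3) u).snd = V (V (V y)) := by rw [h3, hS ((S^2) u), e2s]; rfl
    rw [WithLp.prod_norm_sq_eq_of_L2, WithLp.prod_norm_sq_eq_of_L2,
        WithLp.prod_norm_sq_eq_of_L2, WithLp.prod_norm_sq_eq_of_L2 u,
        e1f, e1s, e2f, e2s, e3f, e3s]
    simp only [hCV, ← map_add, hV]
    rw [← hV x]
    linarith [cube_diff (V x) (C y)]
end

section
/- Suppose T ∈ B(H) and A = A* ∈ B(H) satisfy Δ_T ≤ A ≤ T*AT, where Δ_T = T*T - I. Let D = closure of the range of (A - Δ_T), and define T̂ on H ⊕ ℓ²(ℕ, D) by T̂(h, f) = (Th, ((A-Δ_T)^{1/2}h) prepended to shifted f), i.e., T̂ = [[T, 0],[(A-Δ_T)^{1/2}, S₊]] where S₊ is the forward shift. Then Δ_{T̂} = A ⊕ 0 and T̂ is a convex lifting of T. -/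
open ContinuousLinearMap

local notation "⟪" x ", " y "⟫" => @inner ℂ _ _ x y

/-- Given `T` and a selfadjoint `A` with `Δ_T ≤ A ≤ T*AT` (`Δ_T = T*T - I`),
let `R = (A - Δ_T)^{1/2}` and let `T̂ = [[T, 0],[R, S₊]]` act on the Hilbert
direct sum `H ⊕ ℓ²(ℕ, H)`, where `S₊` is the forward shift. Then
`Δ_{T̂} = A ⊕ 0`, `T̂` is convex, and `T̂` is a lifting of `T`. -/
theorem convex_lifting_construction
    {H : Type*} [NormedAddCommGroup H] [InnerProductSpace ℂ H] [CompleteSpace H]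
    (T A R : H →L[ℂ] H)
    (hAsa : IsSelfAdjoint A)
    (hAlow : (A - (adjoint T ∘L T - 1)).IsPositive)
    (hAup : (adjoint T ∘L (A ∘L T) - A).IsPositive)
    (hRpos : R.IsPositive)
    (hRR : R ∘L R = A - (adjoint T ∘L T - 1))
    (Sh : lp (fun _ : ℕ => H) 2 →L[ℂ] lp (fun _ : ℕ => H) 2)
    (hSh0 : ∀ f : lp (fun _ : ℕ => H) 2, (Sh f : ∀ _ : ℕ, H) 0 = 0)
    (hShS : ∀ (f : lp (fun _ : ℕ => H) 2) (n : ℕ),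
      (Sh f : ∀ _ : ℕ, H) (n + 1) = (f : ∀ _ : ℕ, H) n)
    (Th : WithLp 2 (H × lp (fun _ : ℕ => H) 2) →L[ℂ]
      WithLp 2 (H × lp (fun _ : ℕ => H) 2))
    (hTh : ∀ u : WithLp 2 (H × lp (fun _ : ℕ => H) 2),
      Th u = (WithLp.equiv 2 (H × lp (fun _ : ℕ => H) 2)).symm
        (T u.fst, lp.single 2 0 (R u.fst) + Sh u.snd)) :
    (∀ u : WithLp 2 (H × lp (fun _ : ℕ => H) 2),
      (adjoint Th ∘L Th - 1) u =
        (WithLp.equiv 2 (H × lp (fun _ : ℕ => H) 2)).symm (A u.fst, 0)) ∧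
    (∀ u : WithLp 2 (H × lp (fun _ : ℕ => H) 2),
      0 ≤ ‖Th (Th u)‖ ^ 2 - 2 * ‖Th u‖ ^ 2 + ‖u‖ ^ 2) ∧
    (∀ u : WithLp 2 (H × lp (fun _ : ℕ => H) 2), (Th u).fst = T u.fst) := by
  -- the shift preserves inner products
  have hShinner : ∀ f g : lp (fun _ : ℕ => H) 2, ⟪Sh f, Sh g⟫ = ⟪f, g⟫ := by
    intro f g
    rw [lp.inner_eq_tsum, lp.inner_eq_tsum,
      Summable.tsum_eq_zero_add (lp.summable_inner (𝕜 := ℂ) (Sh f) (Sh g))]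
    simp [hSh0, hShS]
  have hShsingle : ∀ (x : H) (g : lp (fun _ : ℕ => H) 2),
      ⟪lp.single 2 0 x, Sh g⟫ = 0 := by
    intro x g
    rw [lp.inner_single_left, hSh0, inner_zero_right]
  have hsingleSh : ∀ (x : H) (g : lp (fun _ : ℕ => H) 2),
      ⟪Sh g, lp.single 2 0 x⟫ = 0 := by
    intro x g
    rw [lp.inner_single_right, hSh0, inner_zero_left]
  have hsinglesingle : ∀ x y : H, ⟪(lp.single 2 0 x : lp (fun _ : ℕ => H) 2),
      lp.single 2 0 y⟫ = ⟪x, y⟫ := by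
    intro x y
    rw [lp.inner_single_left, lp.single_apply_self]
  have hRsa : adjoint R = R := by
    rw [← ContinuousLinearMap.star_eq_adjoint]; exact hRpos.isSelfAdjoint
  -- the key inner product identity
  have key : ∀ u v : WithLp 2 (H × lp (fun _ : ℕ => H) 2),
      ⟪Th u, Th v⟫ = ⟪A u.fst, v.fst⟫ + ⟪u, v⟫ := by
    intro u v
    rw [hTh u, hTh v]
    rw [show ⟪((WithLp.equiv 2 (H × lp (fun _ : ℕ => H) 2)).symm
        (T u.fst, lp.single 2 0 (R u.fst) + Sh u.snd)),
        ((WithLp.equiv 2 (H × lp (fun _ : ℕ => H) 2)).symm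
        (T v.fst, lp.single 2 0 (R v.fst) + Sh v.snd))⟫ =
        ⟪T u.fst, T v.fst⟫ + ⟪lp.single 2 0 (R u.fst) + Sh u.snd,
          lp.single 2 0 (R v.fst) + Sh v.snd⟫ from WithLp.prod_inner_apply _ _,
      WithLp.prod_inner_apply u v]
    have h2 : ⟪lp.single 2 0 (R u.fst) + Sh u.snd,
        lp.single 2 0 (R v.fst) + Sh v.snd⟫ = ⟪R u.fst, R v.fst⟫ + ⟪u.snd, v.snd⟫ := by
      rw [inner_add_left, inner_add_right, inner_add_right, hShsingle, hsingleSh,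
        hShinner, hsinglesingle]
      ring
    rw [h2]
    have hT : ⟪T u.fst, T v.fst⟫ = ⟪(adjoint T ∘L T) u.fst, v.fst⟫ := by
      rw [comp_apply, adjoint_inner_left]
    have hR : ⟪R u.fst, R v.fst⟫ = ⟪(A - (adjoint T ∘L T - 1)) u.fst, v.fst⟫ := by
      rw [← adjoint_inner_left, hRsa, ← comp_apply, hRR]
    have comb : ⟪(adjoint T ∘L T) u.fst, v.fst⟫
        + ⟪(A - (adjoint T ∘L T - 1)) u.fst, v.fst⟫
        = ⟪A u.fst, v.fst⟫ + ⟪u.fst, v.fst⟫ := by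
      rw [← inner_add_left]
      have : (adjoint T ∘L T) u.fst + (A - (adjoint T ∘L T - 1)) u.fst
          = A u.fst + u.fst := by
        simp only [sub_apply, one_apply]
        abel
      rw [this, inner_add_left]
    rw [hT, hR]
    have e1 : ⟪u.fst, v.fst⟫ = ⟪u.ofLp.1, v.ofLp.1⟫ := rfl
    have e2 : ⟪u.snd, v.snd⟫ = ⟪u.ofLp.2, v.ofLp.2⟫ := rfl
    linear_combination comb + e1 + e2
  -- Part 1
  have part1 : ∀ u : WithLp 2 (H × lp (fun _ : ℕ => H) 2),
      (adjoint Th ∘L Th - 1) u =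
        (WithLp.equiv 2 (H × lp (fun _ : ℕ => H) 2)).symm (A u.fst, 0) := by
    intro u
    apply ext_inner_right ℂ
    intro v
    rw [show ((adjoint Th ∘L Th - 1) u) = adjoint Th (Th u) - u by
      simp [sub_apply]]
    rw [inner_sub_left, adjoint_inner_left, key]
    rw [show ⟪((WithLp.equiv 2 (H × lp (fun _ : ℕ => H) 2)).symm
        ((A u.fst : H), (0 : lp (fun _ : ℕ => H) 2))), v⟫ =
        ⟪A u.fst, v.fst⟫ + ⟪(0 : lp (fun _ : ℕ => H) 2), v.snd⟫ from
      WithLp.prod_inner_apply _ _]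
    rw [inner_zero_left]
    ring
  refine ⟨part1, ?_, fun u => by rw [hTh]; rfl⟩
  -- Part 2: convexity
  have hnorm : ∀ w : WithLp 2 (H × lp (fun _ : ℕ => H) 2),
      ‖Th w‖ ^ 2 = ‖w‖ ^ 2 + RCLike.re ⟪A w.fst, w.fst⟫ := by
    intro w
    have hk := key w w
    have h1 : RCLike.re ⟪Th w, Th w⟫ = ‖Th w‖ ^ 2 := inner_self_eq_norm_sq _
    have h2 : RCLike.re ⟪w, w⟫ = ‖w‖ ^ 2 := inner_self_eq_norm_sq _
    have hre := congrArg RCLike.re hk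
    rw [map_add, h1, h2] at hre
    linarith
  intro u
  have e1 := hnorm u
  have e2 := hnorm (Th u)
  have hfst : (Th u).fst = T u.fst := by rw [hTh]; rfl
  have hpos := hAup.2 u.fst
  rw [reApplyInnerSelf_apply, sub_apply, inner_sub_left, map_sub,
    comp_apply, comp_apply, adjoint_inner_left] at hpos
  rw [e2, e1, hfst]
  linarith
end

section
/- An operator T on H admits a convex lifting T̂ = [[T, 0],[X, V]] with V an isometry and V*X = 0 if and only if there exists a selfadjoint A ∈ B(H) with Δ_T ≤ A ≤ T*AT, where Δ_T = T*T - I. (Forward direction: given such a lifting, A := X*X + Δ_T works.) -/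
open ContinuousLinearMap
open scoped InnerProductSpace

set_option maxHeartbeats 1000000
set_option synthInstance.maxHeartbeats 1000000

noncomputable section AuxConvexLift

open scoped InnerProductSpace ComplexConjugate

variable {H H' : Type} [NormedAddCommGroup H] [InnerProductSpace ℂ H] [CompleteSpace H]
  [NormedAddCommGroup H'] [InnerProductSpace ℂ H'] [CompleteSpace H']

lemma aux_inner_XV (X : H →L[ℂ] H') (V : H' →L[ℂ] H') (hVX : adjoint V ∘L X = 0)
    (x : H) (y : H') : ⟪X x, V y⟫_ℂ = 0 := by
  rw [← adjoint_inner_left]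
  have h : adjoint V (X x) = 0 := by
    have := congrArg (fun (f : H →L[ℂ] H') => f x) hVX
    simpa using this
  rw [h, inner_zero_left]

lemma aux_norm_add (X : H →L[ℂ] H') (V : H' →L[ℂ] H') (hV : ∀ y : H', ‖V y‖ = ‖y‖)
    (hVX : adjoint V ∘L X = 0) (x : H) (y : H') :
    ‖X x + V y‖ ^ 2 = ‖X x‖ ^ 2 + ‖y‖ ^ 2 := by
  rw [norm_add_sq (𝕜 := ℂ), aux_inner_XV X V hVX, hV y]
  simp

end AuxConvexLift

/-- A witness that `T` admits a convex lifting `T̂ = [[T,0],[X,V]]` on `H ⊕ H'`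
with `V` an isometry and `V*X = 0`. Convexity of `T̂` is expressed by
`‖T̂²u‖² - 2‖T̂u‖² + ‖u‖² ≥ 0` for all `u`. -/
structure ConvexIsometricLiftingWitness
    (H : Type) [NormedAddCommGroup H] [InnerProductSpace ℂ H] [CompleteSpace H]
    (T : H →L[ℂ] H) where
  H' : Type
  [inst1 : NormedAddCommGroup H']
  [inst2 : InnerProductSpace ℂ H']
  [inst3 : CompleteSpace H']
  X : H →L[ℂ] H'
  V : H' →L[ℂ] H'
  hV : ∀ y : H', ‖V y‖ = ‖y‖
  hVX : adjoint V ∘L X = 0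
  That : WithLp 2 (H × H') →L[ℂ] WithLp 2 (H × H')
  hThat : ∀ u : WithLp 2 (H × H'),
    That u = (WithLp.equiv 2 (H × H')).symm (T u.fst, X u.fst + V u.snd)
  hconvex : ∀ u : WithLp 2 (H × H'),
    0 ≤ ‖That (That u)‖ ^ 2 - 2 * ‖That u‖ ^ 2 + ‖u‖ ^ 2

noncomputable section ShiftConstruction

open scoped InnerProductSpace

variable {H : Type} [NormedAddCommGroup H] [InnerProductSpace ℂ H] [CompleteSpace H]

/-- right-shifted sequence -/
def shiftFun (f : ∀ _ : ℕ, H) : ∀ _ : ℕ, H := fun n => match n with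
  | 0 => 0
  | n + 1 => f n

lemma two_toReal_pos : 0 < (2 : ENNReal).toReal := by norm_num

lemma shift_memℓp (f : lp (fun _ : ℕ => H) 2) : Memℓp (shiftFun (f : ∀ _ : ℕ, H)) 2 := by
  have hp : 0 < (2 : ENNReal).toReal := two_toReal_pos
  refine (memℓp_gen_iff hp).2 ?_
  have hf : Summable fun n => ‖f n‖ ^ (2 : ENNReal).toReal := (memℓp_gen_iff hp).1 (lp.memℓp f)
  exact (summable_nat_add_iff 1).mp hf

/-- the unilateral shift as a linear isometry on `ℓ²(ℕ, H)` -/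
def shiftLi : lp (fun _ : ℕ => H) 2 →ₗᵢ[ℂ] lp (fun _ : ℕ => H) 2 where
  toFun f := ⟨shiftFun (f : ∀ _ : ℕ, H), shift_memℓp f⟩
  map_add' f g := by
    apply lp.ext
    funext n
    cases n with
    | zero => simp [shiftFun]; exact (add_zero 0).symm
    | succ n => simp [shiftFun]; rfl
  map_smul' c f := by
    apply lp.ext
    funext n
    cases n with
    | zero => simp [shiftFun]
    | succ n => simp [shiftFun]
  norm_map' f := by
    have hp : 0 < (2 : ENNReal).toReal := two_toReal_pos
    apply Real.rpow_left_injOn hp.ne' (norm_nonneg _) (norm_nonneg _)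
    simp only []
    rw [lp.norm_rpow_eq_tsum hp, lp.norm_rpow_eq_tsum hp]
    have hs : Summable fun n => ‖shiftFun (f : ∀ _ : ℕ, H) n‖ ^ (2 : ENNReal).toReal :=
      (memℓp_gen_iff hp).1 (shift_memℓp f)
    calc ∑' n, ‖shiftFun (f : ∀ _ : ℕ, H) n‖ ^ (2 : ENNReal).toReal
        = ‖shiftFun (f : ∀ _ : ℕ, H) 0‖ ^ (2 : ENNReal).toReal
          + ∑' n, ‖shiftFun (f : ∀ _ : ℕ, H) (n + 1)‖ ^ (2 : ENNReal).toReal :=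
          hs.tsum_eq_zero_add
      _ = ∑' n, ‖f n‖ ^ (2 : ENNReal).toReal := by
          simp [shiftFun, Real.zero_rpow hp.ne']

lemma shiftLi_apply (f : lp (fun _ : ℕ => H) 2) (n : ℕ) :
    (shiftLi f : ∀ _ : ℕ, H) n = shiftFun (f : ∀ _ : ℕ, H) n := rfl

/-- inclusion at coordinate `0` as a linear isometry `H → ℓ²(ℕ, H)` -/
def singleLi : H →ₗᵢ[ℂ] lp (fun _ : ℕ => H) 2 where
  toFun a := lp.single (E := fun _ : ℕ => H) 2 0 a
  map_add' a b := by
    apply lp.ext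
    funext j
    simp only [lp.single_apply, lp.coeFn_add, Pi.add_apply, Pi.single_apply]
    split <;> simp
  map_smul' c a := by simpa using lp.single_smul (E := fun _ : ℕ => H) 2 0 c a
  norm_map' a := lp.norm_single (E := fun _ : ℕ => H) (by norm_num) 0 a

end ShiftConstruction

/-- `T` admits a convex lifting `T̂ = [[T,0],[X,V]]` with `V` an isometry and
`V*X = 0` iff there is a selfadjoint `A` with `Δ_T ≤ A ≤ T*AT`
(`Δ_T = T*T - I`). -/
theorem convex_isometric_lifting_iff
    (H : Type) [NormedAddCommGroup H] [InnerProductSpace ℂ H] [CompleteSpace H]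
    (T : H →L[ℂ] H) :
    Nonempty (ConvexIsometricLiftingWitness H T) ↔
      ∃ A : H →L[ℂ] H, IsSelfAdjoint A ∧
        (A - (adjoint T ∘L T - 1)).IsPositive ∧
        (adjoint T ∘L (A ∘L T) - A).IsPositive := by
  constructor
  · rintro ⟨w⟩
    letI := w.inst1; letI := w.inst2; letI := w.inst3
    set X := w.X with hX
    set V := w.V with hV
    have hXV : ∀ (x : H) (y : w.H'), ⟪X x, V y⟫_ℂ = 0 := fun x y => aux_inner_XV X V w.hVX x y
    have hadd : ∀ (x : H) (y : w.H'), ‖X x + V y‖ ^ 2 = ‖X x‖ ^ 2 + ‖y‖ ^ 2 :=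
      fun x y => aux_norm_add X V w.hV w.hVX x y
    have hnorm : ∀ u : WithLp 2 (H × w.H'),
        ‖w.That u‖ ^ 2 = ‖T u.fst‖ ^ 2 + ‖X u.fst‖ ^ 2 + ‖u.snd‖ ^ 2 := by
      intro u
      rw [w.hThat u, WithLp.prod_norm_sq_eq_of_L2]
      have h1 : ((WithLp.equiv 2 (H × w.H')).symm (T u.fst, X u.fst + V u.snd)).fst
          = T u.fst := rfl
      have h2 : ((WithLp.equiv 2 (H × w.H')).symm (T u.fst, X u.fst + V u.snd)).snd
          = X u.fst + V u.snd := rfl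
      rw [h1, h2, hadd]
      ring
    have hconv : ∀ x : H, 0 ≤ ‖T (T x)‖ ^ 2 + ‖X (T x)‖ ^ 2 - ‖X x‖ ^ 2
        - 2 * ‖T x‖ ^ 2 + ‖x‖ ^ 2 := by
      intro x
      have hu := w.hconvex ((WithLp.equiv 2 (H × w.H')).symm (x, 0))
      set u := (WithLp.equiv 2 (H × w.H')).symm (x, 0) with hu_def
      have hfst : u.fst = x := rfl
      have hsnd : u.snd = (0 : w.H') := rfl
      have e1 : ‖w.That u‖ ^ 2 = ‖T x‖ ^ 2 + ‖X x‖ ^ 2 := by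
        rw [hnorm u, hfst, hsnd]; simp
      have e2 : ‖w.That (w.That u)‖ ^ 2
          = ‖T (T x)‖ ^ 2 + ‖X (T x)‖ ^ 2 + ‖X x‖ ^ 2 := by
        rw [hnorm (w.That u), w.hThat u]
        have hfst2 : ((WithLp.equiv 2 (H × w.H')).symm (T u.fst, X u.fst + V u.snd)).fst
            = T u.fst := rfl
        have hsnd2 : ((WithLp.equiv 2 (H × w.H')).symm (T u.fst, X u.fst + V u.snd)).snd
            = X u.fst + V u.snd := rfl
        rw [hfst2, hsnd2, hfst, hsnd, hadd]
        simp
      have e3 : ‖u‖ ^ 2 = ‖x‖ ^ 2 := by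
        rw [WithLp.prod_norm_sq_eq_of_L2, hfst, hsnd]; simp
      rw [e1, e2, e3] at hu
      linarith
    have hXsa : IsSelfAdjoint (adjoint X ∘L X) := by
      rw [ContinuousLinearMap.isSelfAdjoint_iff', ContinuousLinearMap.adjoint_comp,
        ContinuousLinearMap.adjoint_adjoint]
    have hTsa : IsSelfAdjoint (adjoint T ∘L T - 1) := by
      refine IsSelfAdjoint.sub ?_ (IsSelfAdjoint.one _)
      rw [ContinuousLinearMap.isSelfAdjoint_iff', ContinuousLinearMap.adjoint_comp,
        ContinuousLinearMap.adjoint_adjoint]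
    have hA : IsSelfAdjoint (adjoint X ∘L X + (adjoint T ∘L T - 1)) := hXsa.add hTsa
    have hXz : ∀ z : H, ‖X z‖ ^ 2 = RCLike.re ⟪(adjoint X ∘L X) z, z⟫_ℂ := by
      intro z
      rw [ContinuousLinearMap.comp_apply, ContinuousLinearMap.adjoint_inner_left]
      rw [inner_self_eq_norm_sq (𝕜 := ℂ)]
    have hTz : ∀ z : H, ‖T z‖ ^ 2 = RCLike.re ⟪(adjoint T ∘L T) z, z⟫_ℂ := by
      intro z
      rw [ContinuousLinearMap.comp_apply, ContinuousLinearMap.adjoint_inner_left]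
      rw [inner_self_eq_norm_sq (𝕜 := ℂ)]
    have hAz : ∀ z : H,
        RCLike.re ⟪(adjoint X ∘L X + (adjoint T ∘L T - 1)) z, z⟫_ℂ
          = ‖X z‖ ^ 2 + ‖T z‖ ^ 2 - ‖z‖ ^ 2 := by
      intro z
      simp only [ContinuousLinearMap.add_apply, ContinuousLinearMap.sub_apply,
        ContinuousLinearMap.one_apply, inner_add_left, inner_sub_left, map_add, map_sub]
      rw [← hXz z, ← hTz z, inner_self_eq_norm_sq (𝕜 := ℂ)]
      ring
    refine ⟨adjoint X ∘L X + (adjoint T ∘L T - 1), hA, ?_, ?_⟩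
    · have he : adjoint X ∘L X + (adjoint T ∘L T - 1) - (adjoint T ∘L T - 1)
          = adjoint X ∘L X := add_sub_cancel_right _ _
      rw [he]
      refine ⟨hXsa.isSymmetric, fun z => ?_⟩
      rw [ContinuousLinearMap.reApplyInnerSelf, ← hXz z]
      positivity
    · set A := adjoint X ∘L X + (adjoint T ∘L T - 1) with hAdef
      have hsa : IsSelfAdjoint (adjoint T ∘L (A ∘L T) - A) := by
        refine IsSelfAdjoint.sub ?_ hA
        have := hA.conjugate' T
        rw [ContinuousLinearMap.star_eq_adjoint] at this
        rw [show adjoint T ∘L (A ∘L T) = adjoint T * A * T from (mul_assoc _ _ _).symm]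
        exact this
      refine ⟨hsa.isSymmetric, fun x => ?_⟩
      rw [ContinuousLinearMap.reApplyInnerSelf]
      have expand : RCLike.re ⟪(adjoint T ∘L (A ∘L T) - A) x, x⟫_ℂ
          = RCLike.re ⟪A (T x), T x⟫_ℂ - RCLike.re ⟪A x, x⟫_ℂ := by
        rw [ContinuousLinearMap.sub_apply, inner_sub_left, map_sub,
          ContinuousLinearMap.comp_apply, ContinuousLinearMap.comp_apply,
          ContinuousLinearMap.adjoint_inner_left]
      rw [expand, hAz (T x), hAz x]
      have := hconv x
      linarith
  · rintro ⟨A, hA, h1, h2⟩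
    classical
    set B := A - (adjoint T ∘L T - 1) with hBdef
    have hB : 0 ≤ B := (ContinuousLinearMap.nonneg_iff_isPositive B).2 h1
    set S := CFC.sqrt B with hSdef
    have hSpos : S.IsPositive := (ContinuousLinearMap.nonneg_iff_isPositive S).1 (CFC.sqrt_nonneg B)
    have hSsa : IsSelfAdjoint S := hSpos.isSelfAdjoint
    have hSS : S * S = B := CFC.sqrt_mul_sqrt_self B hB
    let H' : Type := lp (fun _ : ℕ => H) 2
    let V : H' →L[ℂ] H' := shiftLi.toContinuousLinearMap
    let X : H →L[ℂ] H' := singleLi.toContinuousLinearMap ∘L S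
    have hV : ∀ y : H', ‖V y‖ = ‖y‖ := fun y => shiftLi.norm_map y
    have hXapp : ∀ x : H, X x = lp.single 2 0 (S x) := fun x => rfl
    have hXnorm : ∀ x : H, ‖X x‖ = ‖S x‖ := fun x => singleLi.norm_map (S x)
    have hVX : adjoint V ∘L X = 0 := by
      refine ContinuousLinearMap.ext fun x => ?_
      rw [ContinuousLinearMap.comp_apply, ContinuousLinearMap.zero_apply]
      refine ext_inner_right ℂ fun v => ?_
      rw [ContinuousLinearMap.adjoint_inner_left, inner_zero_left, hXapp x]
      have hv0 : (V v : ∀ _ : ℕ, H) 0 = 0 := rfl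
      rw [lp.inner_single_left, hv0, inner_zero_right]
    let That : WithLp 2 (H × H') →L[ℂ] WithLp 2 (H × H') :=
      (WithLp.prodContinuousLinearEquiv 2 ℂ H H').symm.toContinuousLinearMap ∘L
        (((T.comp (ContinuousLinearMap.fst ℂ H H')).prod
          (X.comp (ContinuousLinearMap.fst ℂ H H') + V.comp (ContinuousLinearMap.snd ℂ H H'))) ∘L
          (WithLp.prodContinuousLinearEquiv 2 ℂ H H').toContinuousLinearMap)
    have hThat : ∀ u : WithLp 2 (H × H'),
        That u = (WithLp.equiv 2 (H × H')).symm (T u.fst, X u.fst + V u.snd) := fun u => rfl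
    have hadd : ∀ (x : H) (y : H'), ‖X x + V y‖ ^ 2 = ‖X x‖ ^ 2 + ‖y‖ ^ 2 :=
      fun x y => aux_norm_add X V hV hVX x y
    have hXz : ∀ z : H, ‖X z‖ ^ 2
        = RCLike.re ⟪A z, z⟫_ℂ - ‖T z‖ ^ 2 + ‖z‖ ^ 2 := by
      intro z
      rw [hXnorm z]
      have e1 : (‖S z‖ : ℝ) ^ 2 = RCLike.re ⟪S (S z), z⟫_ℂ := by
        have : ⟪S (S z), z⟫_ℂ = ⟪S z, S z⟫_ℂ := by
          calc ⟪S (S z), z⟫_ℂ = ⟪adjoint S (S z), z⟫_ℂ := by rw [hSsa.adjoint_eq]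
            _ = ⟪S z, S z⟫_ℂ := ContinuousLinearMap.adjoint_inner_left S z (S z)
        rw [this, inner_self_eq_norm_sq (𝕜 := ℂ)]
      have e2 : S (S z) = B z := by
        rw [← hSS]; rfl
      rw [e1, e2, hBdef]
      simp only [ContinuousLinearMap.sub_apply, ContinuousLinearMap.one_apply,
        ContinuousLinearMap.comp_apply, inner_sub_left, map_sub]
      rw [ContinuousLinearMap.adjoint_inner_left, inner_self_eq_norm_sq (𝕜 := ℂ),
        inner_self_eq_norm_sq (𝕜 := ℂ)]
      ring
    refine ⟨⟨H', X, V, hV, hVX, That, hThat, ?_⟩⟩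
    intro u
    have hnorm : ∀ v : WithLp 2 (H × H'),
        ‖That v‖ ^ 2 = ‖T v.fst‖ ^ 2 + ‖X v.fst‖ ^ 2 + ‖v.snd‖ ^ 2 := by
      intro v
      rw [hThat v, WithLp.prod_norm_sq_eq_of_L2]
      have hf : ((WithLp.equiv 2 (H × H')).symm (T v.fst, X v.fst + V v.snd)).fst
          = T v.fst := rfl
      have hs : ((WithLp.equiv 2 (H × H')).symm (T v.fst, X v.fst + V v.snd)).snd
          = X v.fst + V v.snd := rfl
      rw [hf, hs, hadd]
      ring
    set x := u.fst with hx
    set y := u.snd with hy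
    have e1 : ‖That u‖ ^ 2 = ‖T x‖ ^ 2 + ‖X x‖ ^ 2 + ‖y‖ ^ 2 := hnorm u
    have e2 : ‖That (That u)‖ ^ 2
        = ‖T (T x)‖ ^ 2 + ‖X (T x)‖ ^ 2 + ‖X x‖ ^ 2 + ‖y‖ ^ 2 := by
      rw [hnorm (That u), hThat u]
      have hf : ((WithLp.equiv 2 (H × H')).symm (T u.fst, X u.fst + V u.snd)).fst
          = T u.fst := rfl
      have hs : ((WithLp.equiv 2 (H × H')).symm (T u.fst, X u.fst + V u.snd)).snd
          = X u.fst + V u.snd := rfl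
      rw [hf, hs, hadd]
      ring
    have e3 : ‖u‖ ^ 2 = ‖x‖ ^ 2 + ‖y‖ ^ 2 := WithLp.prod_norm_sq_eq_of_L2 u
    have hpos := h2.2 x
    rw [ContinuousLinearMap.reApplyInnerSelf] at hpos
    have expand : RCLike.re ⟪(adjoint T ∘L (A ∘L T) - A) x, x⟫_ℂ
        = RCLike.re ⟪A (T x), T x⟫_ℂ - RCLike.re ⟪A x, x⟫_ℂ := by
      rw [ContinuousLinearMap.sub_apply, inner_sub_left, map_sub,
        ContinuousLinearMap.comp_apply, ContinuousLinearMap.comp_apply,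
        ContinuousLinearMap.adjoint_inner_left]
    rw [expand] at hpos
    have hx1 := hXz x
    have hx2 := hXz (T x)
    rw [e1, e2, e3]
    linarith
end
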